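/- arXiv:2406.12596 — 2 statements merged into one kernel-verified Lean document; each statement's English description precedes it below -/
import Mathlib

section
/- Let M ≥ 2, let π be a uniformly random permutation of {0, 1, …, M−1}, and for p, q ∈ ℝ with p, q ∉ ℤ define η(p,q) = (1/M)·∑_{m=0}^{M−1} exp(i·2π·(m·p − π(m)·q)). Then the second moment satisfies exactly E[|η(p,q)|²] = 1/M + (M/(M−1))·(Sa_M(p)² − 1/M)·(Sa_M(q)² − 1/M), where Sa_M(x) = sin(π·M·x)/(M·sin(π·x)). -/
/-- `Sa_M(x) = sin(πMx)/(M sin(πx))`. -/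
noncomputable def Sa (M : ℕ) (x : ℝ) : ℝ :=
  Real.sin (Real.pi * (M : ℝ) * x) / ((M : ℝ) * Real.sin (Real.pi * x))

/-- The random beam correlation of the random-permutation FDA:
`η(p,q) = (1/M)·∑_{m<M} exp(i·2π·(m·p − σ(m)·q))`. -/
noncomputable def eta (M : ℕ) (σ : Equiv.Perm (Fin M)) (p q : ℝ) : ℂ :=
  (M : ℂ)⁻¹ * ∑ m : Fin M,
    Complex.exp (Complex.I * ((2 * Real.pi * (((m : ℕ) : ℝ) * p - ((σ m : ℕ) : ℝ) * q) : ℝ) : ℂ))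

open Complex Finset ComplexConjugate

noncomputable def cE (t : ℝ) : ℂ := Complex.exp (Complex.I * (t : ℂ))

lemma cE_add (s t : ℝ) : cE s * cE t = cE (s + t) := by
  simp [cE, ← Complex.exp_add]; ring_nf

lemma cE_conj (t : ℝ) : (starRingEnd ℂ) (cE t) = cE (-t) := by
  simp [cE, ← Complex.exp_conj]

lemma cE_self_conj (t : ℝ) : (starRingEnd ℂ) (cE t) * cE t = 1 := by
  rw [cE_conj, cE_add]; simp [cE]

lemma sin_pi_mul_ne_zero' {x : ℝ} (hx : ∀ k : ℤ, x ≠ (k : ℝ)) : Real.sin (Real.pi * x) ≠ 0 := by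
  intro h
  rw [Real.sin_eq_zero_iff] at h
  obtain ⟨n, hn⟩ := h
  have h2 : Real.pi * x = Real.pi * (n : ℝ) := by linarith
  exact hx n (mul_left_cancel₀ Real.pi_ne_zero h2)

lemma cE_ne_one {x : ℝ} (hx : ∀ k : ℤ, x ≠ (k : ℝ)) : cE (2 * Real.pi * x) ≠ 1 := by
  intro h
  rw [cE, Complex.exp_eq_one_iff] at h
  obtain ⟨n, hn⟩ := h
  apply hx n
  have h2 : ((2 * Real.pi * x : ℝ) : ℂ) * Complex.I = (((n : ℝ) * (2 * Real.pi)) : ℝ) * Complex.I := by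
    rw [show ((2 * Real.pi * x : ℝ) : ℂ) * Complex.I = Complex.I * (2 * Real.pi * x : ℝ) by ring, hn]
    push_cast; ring
  have h3 : (2 * Real.pi * x : ℝ) = (n : ℝ) * (2 * Real.pi) := by
    exact_mod_cast mul_right_cancel₀ Complex.I_ne_zero h2
  have h4 : (2 * Real.pi) * x = (2 * Real.pi) * (n : ℝ) := by linarith
  exact mul_left_cancel₀ (by positivity) h4

lemma normSq_cE_sub_one (θ : ℝ) : Complex.normSq (cE θ - 1) = 4 * Real.sin (θ / 2) ^ 2 := by
  have h1 : cE θ = Complex.exp ((θ : ℂ) * Complex.I) := by rw [cE, mul_comm]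
  rw [h1, Complex.normSq_apply]
  simp [Complex.sub_re, Complex.sub_im, Complex.exp_ofReal_mul_I_re, Complex.exp_ofReal_mul_I_im]
  have h2 : Real.cos θ = 2 * Real.cos (θ/2)^2 - 1 := by
    have := Real.cos_two_mul (θ/2); rw [← this]; ring_nf
  have h3 := Real.sin_sq_add_cos_sq (θ/2)
  have h4 := Real.sin_sq_add_cos_sq θ
  nlinarith

lemma cE_nat_mul (n : ℕ) (t : ℝ) : cE ((n : ℝ) * t) = cE t ^ n := by
  rw [cE, cE, ← Complex.exp_nat_mul]
  congr 1
  push_cast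
  ring

lemma normSq_sum_cE (M : ℕ) (hM : M ≠ 0) {x : ℝ} (hx : ∀ k : ℤ, x ≠ (k : ℝ)) :
    Complex.normSq (∑ a : Fin M, cE (2 * Real.pi * ((a : ℝ) * x)))
      = ((M : ℝ) * Sa M x) ^ 2 := by
  have hr : cE (2 * Real.pi * x) ≠ 1 := cE_ne_one hx
  have h1 : (∑ a : Fin M, cE (2 * Real.pi * ((a : ℝ) * x)))
      = ∑ i ∈ range M, cE (2 * Real.pi * x) ^ i := by
    rw [← Fin.sum_univ_eq_sum_range (fun i => cE (2 * Real.pi * x) ^ i) M]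
    congr 1
    ext a
    rw [← cE_nat_mul]
    congr 1
    ring
  rw [h1, geom_sum_eq hr, Complex.normSq_div]
  have h2 : cE (2 * Real.pi * x) ^ M = cE ((M : ℝ) * (2 * Real.pi * x)) := (cE_nat_mul M _).symm
  rw [h2, normSq_cE_sub_one, normSq_cE_sub_one]
  have h3 : (M : ℝ) * (2 * Real.pi * x) / 2 = Real.pi * (M : ℝ) * x := by ring
  have h4 : (2 * Real.pi * x) / 2 = Real.pi * x := by ring
  rw [h3, h4, Sa]
  have h5 : Real.sin (Real.pi * x) ≠ 0 := sin_pi_mul_ne_zero' hx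
  have h6 : (M : ℝ) ≠ 0 := Nat.cast_ne_zero.mpr hM
  field_simp

lemma perm_pair_invariant (M : ℕ) (H : Fin M → Fin M → ℂ) {m n m' n' : Fin M}
    (h : m ≠ n) (h' : m' ≠ n') :
    ∑ σ : Equiv.Perm (Fin M), H (σ m) (σ n) = ∑ σ : Equiv.Perm (Fin M), H (σ m') (σ n') := by
  classical
  set s1 := Equiv.swap m m' with hs1
  set n'' := s1 n with hn''
  set τ := s1.trans (Equiv.swap n'' n') with hτ
  have hsm : s1 m = m' := Equiv.swap_apply_left m m'
  have hm'n'' : m' ≠ n'' := by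
    intro he
    apply h
    apply s1.injective
    rw [hsm]
    exact he.trans hn''
  have hτm : τ m = m' := by
    show Equiv.swap n'' n' (s1 m) = m'
    rw [hsm]
    exact Equiv.swap_apply_of_ne_of_ne hm'n'' h'
  have hτn : τ n = n' := by
    show Equiv.swap n'' n' (s1 n) = n'
    rw [← hn'']
    exact Equiv.swap_apply_left n'' n'
  have := Equiv.sum_comp (Equiv.mulRight τ) (fun σ : Equiv.Perm (Fin M) => H (σ m) (σ n))
  simp only [Equiv.coe_mulRight, Equiv.Perm.mul_apply, hτm, hτn] at this
  exact this.symm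

lemma sum_perm_full {M : ℕ} (σ : Equiv.Perm (Fin M)) (H : Fin M → Fin M → ℂ) :
    (∑ m : Fin M, ∑ n : Fin M, H (σ m) (σ n)) = ∑ a : Fin M, ∑ b : Fin M, H a b := by
  calc (∑ m : Fin M, ∑ n : Fin M, H (σ m) (σ n))
      = ∑ a : Fin M, ∑ n : Fin M, H a (σ n) := Equiv.sum_comp σ (fun a => ∑ n, H a (σ n))
    _ = ∑ a : Fin M, ∑ b : Fin M, H a b := Finset.sum_congr rfl fun a _ => Equiv.sum_comp σ (H a)

lemma sum_perm_diag {M : ℕ} (σ : Equiv.Perm (Fin M)) (H : Fin M → Fin M → ℂ) :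
    (∑ m : Fin M, H (σ m) (σ m)) = ∑ a : Fin M, H a a :=
  Equiv.sum_comp σ (fun a => H a a)

lemma perm_sum_split (M : ℕ) (H : Fin M → Fin M → ℂ) {m₀ n₀ : Fin M} (h : m₀ ≠ n₀) :
    ((M : ℂ) * ((M : ℂ) - 1)) * (∑ σ : Equiv.Perm (Fin M), H (σ m₀) (σ n₀))
      = (M.factorial : ℂ) * ((∑ a : Fin M, ∑ b : Fin M, H a b) - ∑ a : Fin M, H a a) := by
  classical
  have hMpos : 0 < M := by have := m₀.isLt; omega
  set C : ℂ := ∑ σ : Equiv.Perm (Fin M), H (σ m₀) (σ n₀) with hC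
  have key : ∀ m n : Fin M, m ≠ n → (∑ σ : Equiv.Perm (Fin M), H (σ m) (σ n)) = C :=
    fun m n hmn => perm_pair_invariant M H hmn h
  have hcard : Fintype.card (Equiv.Perm (Fin M)) = M.factorial := by
    rw [Fintype.card_perm, Fintype.card_fin]
  have hA1 : (∑ m : Fin M, ∑ n : Fin M, ∑ σ : Equiv.Perm (Fin M), H (σ m) (σ n))
      = ∑ σ : Equiv.Perm (Fin M), ∑ m : Fin M, ∑ n : Fin M, H (σ m) (σ n) := by
    calc (∑ m : Fin M, ∑ n : Fin M, ∑ σ : Equiv.Perm (Fin M), H (σ m) (σ n))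
        = ∑ m : Fin M, ∑ σ : Equiv.Perm (Fin M), ∑ n : Fin M, H (σ m) (σ n) :=
          Finset.sum_congr rfl fun m _ => Finset.sum_comm
      _ = ∑ σ : Equiv.Perm (Fin M), ∑ m : Fin M, ∑ n : Fin M, H (σ m) (σ n) := Finset.sum_comm
  have hA2 : (∑ m : Fin M, ∑ n : Fin M, ∑ σ : Equiv.Perm (Fin M), H (σ m) (σ n))
      = (M.factorial : ℂ) * ∑ a : Fin M, ∑ b : Fin M, H a b := by
    rw [hA1, Finset.sum_congr rfl (fun σ _ => sum_perm_full σ H)]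
    simp [Finset.card_univ, hcard, nsmul_eq_mul]
  have hdiag : (∑ m : Fin M, ∑ σ : Equiv.Perm (Fin M), H (σ m) (σ m))
      = (M.factorial : ℂ) * ∑ a : Fin M, H a a := by
    rw [Finset.sum_comm, Finset.sum_congr rfl (fun σ _ => sum_perm_diag σ H)]
    simp [Finset.card_univ, hcard, nsmul_eq_mul]
  have hsplit : ∀ m : Fin M, (∑ n : Fin M, ∑ σ : Equiv.Perm (Fin M), H (σ m) (σ n))
      = ((M - 1 : ℕ) : ℂ) * C + ∑ σ : Equiv.Perm (Fin M), H (σ m) (σ m) := by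
    intro m
    rw [← Finset.sum_erase_add _ _ (Finset.mem_univ m)]
    congr 1
    have hCn : ∀ n ∈ Finset.univ.erase m, (∑ σ : Equiv.Perm (Fin M), H (σ m) (σ n)) = C := by
      intro n hn
      exact key m n (fun he => (Finset.mem_erase.mp hn).1 he.symm)
    rw [Finset.sum_congr rfl hCn, Finset.sum_const, Finset.card_erase_of_mem (Finset.mem_univ m),
      Finset.card_univ, Fintype.card_fin, nsmul_eq_mul]
  have hA3 : (∑ m : Fin M, ∑ n : Fin M, ∑ σ : Equiv.Perm (Fin M), H (σ m) (σ n))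
      = (M : ℂ) * (((M - 1 : ℕ) : ℂ) * C) + (M.factorial : ℂ) * ∑ a : Fin M, H a a := by
    rw [Finset.sum_congr rfl (fun m _ => hsplit m), Finset.sum_add_distrib, Finset.sum_const,
      Finset.card_univ, Fintype.card_fin, nsmul_eq_mul, hdiag]
  have hcast : ((M - 1 : ℕ) : ℂ) = (M : ℂ) - 1 := by
    push_cast [Nat.cast_sub hMpos]; ring
  rw [hcast] at hA3
  have := hA2.symm.trans hA3
  linear_combination -this

lemma cE_mul_conj (t : ℝ) : cE t * conj (cE t) = 1 := by
  rw [mul_comm]; exact cE_self_conj t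


/-- For a uniformly random permutation of `{0,…,M−1}` (`M ≥ 2`) and non-integer
`p, q`, the second moment of the beam correlation satisfies exactly
`E[|η(p,q)|²] = 1/M + (M/(M−1))·(Sa_M(p)² − 1/M)·(Sa_M(q)² − 1/M)`. -/
theorem stmt_7 (M : ℕ) (hM : 2 ≤ M) (p q : ℝ)
    (hp : ∀ k : ℤ, p ≠ (k : ℝ)) (hq : ∀ k : ℤ, q ≠ (k : ℝ)) :
    (Nat.factorial M : ℝ)⁻¹ * (∑ σ : Equiv.Perm (Fin M), ‖eta M σ p q‖ ^ 2)
      = 1 / (M : ℝ) +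
        ((M : ℝ) / ((M : ℝ) - 1)) * (Sa M p ^ 2 - 1 / (M : ℝ)) * (Sa M q ^ 2 - 1 / (M : ℝ)) := by

  classical
  have hMne : M ≠ 0 := by omega
  have hM0r : (M : ℝ) ≠ 0 := Nat.cast_ne_zero.mpr hMne
  have hM0c : (M : ℂ) ≠ 0 := Nat.cast_ne_zero.mpr hMne
  have hM1c : (M : ℂ) - 1 ≠ 0 := by
    intro h
    rw [sub_eq_zero] at h
    have : M = 1 := by exact_mod_cast h
    omega
  have hM1r : (M : ℝ) - 1 ≠ 0 := by
    intro h
    rw [sub_eq_zero] at h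
    have : M = 1 := by exact_mod_cast h
    omega
  have hfacr : ((M.factorial : ℕ) : ℝ) ≠ 0 := Nat.cast_ne_zero.mpr (Nat.factorial_ne_zero M)
  have hfacc : ((M.factorial : ℕ) : ℂ) ≠ 0 := Nat.cast_ne_zero.mpr (Nat.factorial_ne_zero M)
  set u : Fin M → ℂ := fun m => cE (2 * Real.pi * ((m : ℝ) * p)) with hu
  set v : Fin M → ℂ := fun a => cE (2 * Real.pi * ((a : ℝ) * q)) with hv
  set Hf : Fin M → Fin M → ℂ := fun a b => conj (v a) * v b with hHf
  have hm0lt : 0 < M := by omega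
  have hn0lt : 1 < M := by omega
  set m₀ : Fin M := ⟨0, hm0lt⟩ with hm₀
  set n₀ : Fin M := ⟨1, hn0lt⟩ with hn₀
  have hmn : m₀ ≠ n₀ := by
    intro h
    have := Fin.mk.injEq 0 hm0lt 1 hn0lt  -- just use val
    simp [hm₀, hn₀, Fin.ext_iff] at h
  set C : ℂ := ∑ σ : Equiv.Perm (Fin M), Hf (σ m₀) (σ n₀) with hCdef
  have hcardperm : Fintype.card (Equiv.Perm (Fin M)) = M.factorial := by
    rw [Fintype.card_perm, Fintype.card_fin]
  -- Step 1 : per-σ expansion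
  have hstep1 : ∀ σ : Equiv.Perm (Fin M),
      ((‖eta M σ p q‖ ^ 2 : ℝ) : ℂ)
        = (M : ℂ)⁻¹ * (M : ℂ)⁻¹ *
            ∑ m : Fin M, ∑ n : Fin M, (u m * conj (u n)) * Hf (σ m) (σ n) := by
    intro σ
    have hz : ((‖eta M σ p q‖ ^ 2 : ℝ) : ℂ)
        = eta M σ p q * conj (eta M σ p q) := by
      rw [Complex.sq_norm]
      exact (Complex.mul_conj _).symm
    rw [hz]
    have heta : eta M σ p q = (M : ℂ)⁻¹ * ∑ m : Fin M, u m * conj (v (σ m)) := by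
      rw [_root_.eta]
      congr 1
      apply Finset.sum_congr rfl
      intro m _
      rw [hu, hv]
      show cE (2 * Real.pi * (((m : ℕ) : ℝ) * p - ((σ m : ℕ) : ℝ) * q))
          = cE (2 * Real.pi * ((m : ℝ) * p)) * conj (cE (2 * Real.pi * (((σ m : Fin M) : ℝ) * q)))
      rw [cE_conj, cE_add]
      congr 1
      ring
    have hconj : conj (eta M σ p q) = (M : ℂ)⁻¹ * ∑ n : Fin M, conj (u n) * v (σ n) := by
      rw [heta, map_mul, map_sum]
      congr 1
      · simp
      · apply Finset.sum_congr rfl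
        intro n _
        rw [map_mul, Complex.conj_conj]
    rw [hconj, heta, mul_mul_mul_comm, Finset.sum_mul_sum]
    congr 1
    apply Finset.sum_congr rfl
    intro m _
    apply Finset.sum_congr rfl
    intro n _
    rw [hHf]
    ring
  -- Step 2 : sum over σ and commute
  have hstep2 : (∑ σ : Equiv.Perm (Fin M), ((‖eta M σ p q‖ ^ 2 : ℝ) : ℂ))
      = (M : ℂ)⁻¹ * (M : ℂ)⁻¹ *
          ∑ m : Fin M, ∑ n : Fin M, (u m * conj (u n)) *
            (∑ σ : Equiv.Perm (Fin M), Hf (σ m) (σ n)) := by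
    rw [Finset.sum_congr rfl (fun σ _ => hstep1 σ), ← Finset.mul_sum]
    congr 1
    calc (∑ σ : Equiv.Perm (Fin M), ∑ m : Fin M, ∑ n : Fin M,
            (u m * conj (u n)) * Hf (σ m) (σ n))
        = ∑ m : Fin M, ∑ σ : Equiv.Perm (Fin M), ∑ n : Fin M,
            (u m * conj (u n)) * Hf (σ m) (σ n) := Finset.sum_comm
      _ = ∑ m : Fin M, ∑ n : Fin M, ∑ σ : Equiv.Perm (Fin M),
            (u m * conj (u n)) * Hf (σ m) (σ n) :=
          Finset.sum_congr rfl fun m _ => Finset.sum_comm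
      _ = ∑ m : Fin M, ∑ n : Fin M, (u m * conj (u n)) *
            (∑ σ : Equiv.Perm (Fin M), Hf (σ m) (σ n)) := by
          simp [Finset.mul_sum]
  -- Step 3 : the σ-sum depends only on m = n or not
  have hFs : ∀ m n : Fin M, (∑ σ : Equiv.Perm (Fin M), Hf (σ m) (σ n))
      = if m = n then (M.factorial : ℂ) else C := by
    intro m n
    by_cases hmn' : m = n
    · subst hmn'
      rw [if_pos rfl]
      have h1 : ∀ σ : Equiv.Perm (Fin M), Hf (σ m) (σ m) = 1 := by
        intro σ
        rw [hHf]
        exact cE_self_conj _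
      rw [Finset.sum_congr rfl (fun σ _ => h1 σ), Finset.sum_const, Finset.card_univ, hcardperm]
      simp
    · rw [if_neg hmn']
      exact perm_pair_invariant M Hf hmn' hmn
  -- Step 4 : split sum
  have hG : (∑ m : Fin M, ∑ n : Fin M, u m * conj (u n))
      = ((((M : ℝ) * Sa M p) ^ 2 : ℝ) : ℂ) := by
    rw [← Finset.sum_mul_sum, ← map_sum, Complex.mul_conj, normSq_sum_cE M hMne hp]
  have hGd : (∑ m : Fin M, u m * conj (u m)) = (M : ℂ) := by
    rw [Finset.sum_congr rfl (fun m _ => cE_mul_conj _), Finset.sum_const, Finset.card_univ,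
      Fintype.card_fin, nsmul_eq_mul, mul_one]
  have hHsum : (∑ a : Fin M, ∑ b : Fin M, Hf a b)
      = ((((M : ℝ) * Sa M q) ^ 2 : ℝ) : ℂ) := by
    rw [hHf]
    calc (∑ a : Fin M, ∑ b : Fin M, conj (v a) * v b)
        = (∑ a : Fin M, conj (v a)) * (∑ b : Fin M, v b) := (Finset.sum_mul_sum _ _ _ _).symm
      _ = (∑ b : Fin M, v b) * conj (∑ a : Fin M, v a) := by rw [← map_sum]; ring
      _ = ((((M : ℝ) * Sa M q) ^ 2 : ℝ) : ℂ) := by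
          rw [Complex.mul_conj, normSq_sum_cE M hMne hq]
  have hHdiag : (∑ a : Fin M, Hf a a) = (M : ℂ) := by
    rw [Finset.sum_congr rfl (fun a _ => cE_self_conj _), Finset.sum_const, Finset.card_univ,
      Fintype.card_fin, nsmul_eq_mul, mul_one]
  have hC : ((M : ℂ) * ((M : ℂ) - 1)) * C
      = (M.factorial : ℂ) * (((((M : ℝ) * Sa M q) ^ 2 : ℝ) : ℂ) - (M : ℂ)) := by
    rw [hCdef]
    rw [perm_sum_split M Hf hmn, hHsum, hHdiag]
  have hCval : C = (M.factorial : ℂ) * (((((M : ℝ) * Sa M q) ^ 2 : ℝ) : ℂ) - (M : ℂ))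
      / ((M : ℂ) * ((M : ℂ) - 1)) := by
    rw [eq_div_iff (mul_ne_zero hM0c hM1c)]
    linear_combination hC
  -- Step 5 : assemble
  have hsplit : (∑ m : Fin M, ∑ n : Fin M, (u m * conj (u n)) *
        (∑ σ : Equiv.Perm (Fin M), Hf (σ m) (σ n)))
      = ((((M : ℝ) * Sa M p) ^ 2 : ℝ) : ℂ) * C + (M : ℂ) * ((M.factorial : ℂ) - C) := by
    have h1 : ∀ m n : Fin M, (u m * conj (u n)) *
          (∑ σ : Equiv.Perm (Fin M), Hf (σ m) (σ n))
        = (u m * conj (u n)) * C +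
            (if n = m then (u m * conj (u m)) * ((M.factorial : ℂ) - C) else 0) := by
      intro m n
      rw [hFs m n]
      by_cases h : m = n
      · subst h
        rw [if_pos rfl, if_pos rfl]
        ring
      · rw [if_neg h, if_neg (fun hh => h hh.symm)]
        ring
    calc (∑ m : Fin M, ∑ n : Fin M, (u m * conj (u n)) *
            (∑ σ : Equiv.Perm (Fin M), Hf (σ m) (σ n)))
        = ∑ m : Fin M, ∑ n : Fin M, ((u m * conj (u n)) * C +
            (if n = m then (u m * conj (u m)) * ((M.factorial : ℂ) - C) else 0)) := by
          exact Finset.sum_congr rfl fun m _ => Finset.sum_congr rfl fun n _ => h1 m n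
      _ = ∑ m : Fin M, ((∑ n : Fin M, (u m * conj (u n)) * C) +
            (u m * conj (u m)) * ((M.factorial : ℂ) - C)) := by
          apply Finset.sum_congr rfl
          intro m _
          rw [Finset.sum_add_distrib]
          congr 1
          exact (Finset.sum_ite_eq' Finset.univ m
            (fun _ => (u m * conj (u m)) * ((M.factorial : ℂ) - C))).trans (by simp)
      _ = ((((M : ℝ) * Sa M p) ^ 2 : ℝ) : ℂ) * C + (M : ℂ) * ((M.factorial : ℂ) - C) := by
          rw [Finset.sum_add_distrib, ← Finset.sum_mul]
          have e1 : (∑ m : Fin M, ∑ n : Fin M, (u m * conj (u n)) * C)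
              = (∑ m : Fin M, ∑ n : Fin M, u m * conj (u n)) * C := by
            rw [Finset.sum_mul]
            exact Finset.sum_congr rfl fun m _ => (Finset.sum_mul _ _ _).symm
          rw [e1, hG, hGd]
  -- Step 6 : final complex identity
  have hfinal : (∑ σ : Equiv.Perm (Fin M), ((‖eta M σ p q‖ ^ 2 : ℝ) : ℂ))
      = ((M.factorial : ℝ) * (1 / (M : ℝ) + ((M : ℝ) / ((M : ℝ) - 1)) *
          (Sa M p ^ 2 - 1 / (M : ℝ)) * (Sa M q ^ 2 - 1 / (M : ℝ))) : ℝ) := by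
    rw [hstep2, hsplit, hCval]
    push_cast
    field_simp
    ring
  -- Step 7 : pass to ℝ
  have hreal : (∑ σ : Equiv.Perm (Fin M), ‖eta M σ p q‖ ^ 2)
      = (M.factorial : ℝ) * (1 / (M : ℝ) + ((M : ℝ) / ((M : ℝ) - 1)) *
          (Sa M p ^ 2 - 1 / (M : ℝ)) * (Sa M q ^ 2 - 1 / (M : ℝ))) := by
    have := hfinal
    rw [← Complex.ofReal_sum] at this
    exact_mod_cast this
  rw [hreal, inv_mul_cancel_left₀ hfacr]
end

section
/- (Corollary 1, asymptotic orthogonality) For each M ≥ 2 let π_M be a uniformly random permutation of {0, 1, …, M−1} and define η_M(p,q) = (1/M)·∑_{m=0}^{M−1} exp(i·2π·(m·p − π_M(m)·q)). If p ∉ ℤ or q ∉ ℤ, then E[|η_M(p,q)|²] → 0 as M → ∞; that is, the random-permutation FDA steering vectors at two locations differing in angle or in distance (within one distance period) are asymptotically orthogonal in mean square as the number of antennas grows. -/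
open Complex Finset

/-! ### Auxiliary lemmas -/

noncomputable def ee (x : ℝ) : ℂ := Complex.exp (Complex.I * ((2 * Real.pi * x : ℝ) : ℂ))

lemma ee_add (x y : ℝ) : ee (x + y) = ee x * ee y := by
  unfold ee; rw [← Complex.exp_add]; congr 1; push_cast; ring

lemma conj_ee (x : ℝ) : (starRingEnd ℂ) (ee x) = ee (-x) := by
  unfold ee; rw [← Complex.exp_conj]; congr 1
  rw [map_mul, Complex.conj_I, Complex.conj_ofReal]; push_cast; ring

lemma ee_mul_conj (x : ℝ) : ee x * (starRingEnd ℂ) (ee x) = 1 := by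
  rw [conj_ee, ← ee_add]; simp [ee]

lemma abs_ee (x : ℝ) : ‖ee x‖ = 1 := by
  simp [ee, Complex.norm_exp]

lemma ee_nat_mul (n : ℕ) (x : ℝ) : ee (n * x) = ee x ^ n := by
  unfold ee; rw [← Complex.exp_nat_mul]; congr 1; push_cast; ring

lemma ee_ne_one {x : ℝ} (hx : ∀ k : ℤ, x ≠ (k : ℝ)) : ee x ≠ 1 := by
  intro heq
  rw [ee, Complex.exp_eq_one_iff] at heq
  obtain ⟨n, hn⟩ := heq
  have him := congrArg Complex.im hn
  simp only [Complex.mul_im, Complex.I_re, Complex.I_im, Complex.ofReal_re, Complex.ofReal_im,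
    Complex.mul_re, Complex.intCast_re, Complex.intCast_im] at him
  norm_num at him
  have h2 : (2 * Real.pi) * x = (2 * Real.pi) * (n : ℝ) := by linarith
  exact hx n (mul_left_cancel₀ (by positivity) h2)

lemma geom_abs_le {z : ℂ} (hz : z ≠ 1) (hz1 : ‖z‖ = 1) (M : ℕ) :
    ‖∑ m ∈ Finset.range M, z ^ m‖ ≤ 2 / ‖z - 1‖ := by
  rw [geom_sum_eq hz, norm_div]
  have hd : 0 < ‖z - 1‖ := by
    simpa using sub_ne_zero.mpr hz
  have hnum : ‖z ^ M - 1‖ ≤ 2 := by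
    calc ‖z ^ M - 1‖ ≤ ‖z ^ M‖ + ‖1‖ :=
          norm_sub_le _ _
    _ = 2 := by rw [norm_pow, hz1]; norm_num
  gcongr

/-- The geometric sum `∑_{m<M} e(m x)`. -/
noncomputable def SP (x : ℝ) (M : ℕ) : ℂ := ∑ m : Fin M, ee ((m : ℝ) * x)

lemma SP_eq_geom (x : ℝ) (M : ℕ) : SP x M = ∑ m ∈ Finset.range M, (ee x) ^ m := by
  rw [SP, Fin.sum_univ_eq_sum_range (fun m => ee ((m : ℝ) * x)) M]
  exact Finset.sum_congr rfl fun m _ => by rw [← ee_nat_mul]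

lemma abs_SP_le_card (x : ℝ) (M : ℕ) : ‖SP x M‖ ≤ M := by
  rw [SP]
  calc ‖∑ m : Fin M, ee ((m : ℝ) * x)‖
      ≤ ∑ m : Fin M, ‖ee ((m : ℝ) * x)‖ := norm_sum_le _ _
    _ = M := by simp [abs_ee]

lemma abs_SP_le_const {x : ℝ} (hx : ∀ k : ℤ, x ≠ (k : ℝ)) (M : ℕ) :
    ‖SP x M‖ ≤ 2 / ‖ee x - 1‖ := by
  rw [SP_eq_geom]
  exact geom_abs_le (ee_ne_one hx) (abs_ee x) M

/-- `XX x M = |SP x M|² − M` as a complex number. -/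
noncomputable def XX (x : ℝ) (M : ℕ) : ℂ := SP x M * (starRingEnd ℂ) (SP x M) - M

lemma abs_XX_le (x : ℝ) (M : ℕ) :
    ‖XX x M‖ ≤ ‖SP x M‖ ^ 2 + M := by
  rw [XX]
  calc ‖SP x M * (starRingEnd ℂ) (SP x M) - (M : ℂ)‖
      ≤ ‖SP x M * (starRingEnd ℂ) (SP x M)‖ + ‖(M : ℂ)‖ :=
        norm_sub_le _ _
    _ = ‖SP x M‖ ^ 2 + M := by
        rw [norm_mul, Complex.norm_conj, Complex.norm_natCast]; ring

lemma exists_perm_two {M : ℕ} {m n m' n' : Fin M} (h : m ≠ n) (h' : m' ≠ n') :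
    ∃ τ : Equiv.Perm (Fin M), τ m' = m ∧ τ n' = n := by
  classical
  set τ₁ := Equiv.swap m' m with hτ₁
  have h1 : τ₁ m' = m := Equiv.swap_apply_left _ _
  have hn''m : τ₁ n' ≠ m := by
    intro e
    have : τ₁ n' = τ₁ m' := by rw [h1, e]
    exact h' (τ₁.injective this).symm
  refine ⟨Equiv.swap (τ₁ n') n * τ₁, ?_, ?_⟩
  · simp only [Equiv.Perm.mul_apply, h1]
    exact Equiv.swap_apply_of_ne_of_ne (Ne.symm hn''m) h
  · simp only [Equiv.Perm.mul_apply]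
    exact Equiv.swap_apply_left _ _

lemma sum_perm_pair_const {M : ℕ} (f : Fin M → Fin M → ℂ) {m n m' n' : Fin M}
    (h : m ≠ n) (h' : m' ≠ n') :
    ∑ σ : Equiv.Perm (Fin M), f (σ m) (σ n) = ∑ σ : Equiv.Perm (Fin M), f (σ m') (σ n') := by
  obtain ⟨τ, hm, hn⟩ := exists_perm_two h h'
  calc ∑ σ : Equiv.Perm (Fin M), f (σ m) (σ n)
      = ∑ σ : Equiv.Perm (Fin M), f ((Equiv.mulRight τ σ) m') ((Equiv.mulRight τ σ) n') := by
        apply Finset.sum_congr rfl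
        intro σ _
        simp [Equiv.Perm.mul_apply, hm, hn]
    _ = ∑ σ : Equiv.Perm (Fin M), f (σ m') (σ n') :=
        Equiv.sum_comp (Equiv.mulRight τ) (fun σ => f (σ m') (σ n'))

lemma double_sum_ite {M : ℕ} (c : Fin M → Fin M → ℂ) (u v : ℂ) :
    ∑ m : Fin M, ∑ n : Fin M, c m n * (if m = n then u else v)
      = v * (∑ m : Fin M, ∑ n : Fin M, c m n) + (u - v) * ∑ m : Fin M, c m m := by
  have key : ∀ m n : Fin M, c m n * (if m = n then u else v)
      = c m n * v + (if m = n then c m n * (u - v) else 0) := by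
    intro m n; by_cases hmn : m = n <;> simp [hmn] <;> ring
  simp_rw [key, Finset.sum_add_distrib, Finset.sum_ite_eq, Finset.mem_univ, if_true]
  simp_rw [← Finset.sum_mul]
  ring

section main
variable {M : ℕ} (hM : 2 ≤ M)

/-- the card of perms -/
lemma card_perm_fin (M : ℕ) : (Finset.univ : Finset (Equiv.Perm (Fin M))).card = Nat.factorial M := by
  rw [Finset.card_univ, Fintype.card_perm, Fintype.card_fin]

lemma Fmn_eq {b : Fin M → ℂ} (hb : ∀ k, b k * (starRingEnd ℂ) (b k) = 1) (m n : Fin M) :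
    ∑ σ : Equiv.Perm (Fin M), b (σ m) * (starRingEnd ℂ) (b (σ n))
      = if m = n then ((Nat.factorial M : ℕ) : ℂ)
        else ∑ σ : Equiv.Perm (Fin M),
          b (σ ⟨0, by omega⟩) * (starRingEnd ℂ) (b (σ ⟨1, by omega⟩)) := by
  by_cases hmn : m = n
  · subst hmn
    simp only [if_pos rfl]
    simp [hb, Fintype.card_perm, Fintype.card_fin]
  · rw [if_neg hmn]
    have h01 : (⟨0, by omega⟩ : Fin M) ≠ ⟨1, by omega⟩ := by simp [Fin.ext_iff]
    exact sum_perm_pair_const (fun x y => b x * (starRingEnd ℂ) (b y)) hmn h01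

/-- identity 2: value of F₀ -/
lemma identity2 {b : Fin M → ℂ} (hb : ∀ k, b k * (starRingEnd ℂ) (b k) = 1) :
    (∑ σ : Equiv.Perm (Fin M),
        b (σ ⟨0, by omega⟩) * (starRingEnd ℂ) (b (σ ⟨1, by omega⟩))) * ((M:ℂ)^2 - M)
      = ((Nat.factorial M : ℕ) : ℂ) *
        ((∑ k, b k) * (starRingEnd ℂ) (∑ k, b k) - M) := by
  set F₀ := ∑ σ : Equiv.Perm (Fin M),
      b (σ ⟨0, by omega⟩) * (starRingEnd ℂ) (b (σ ⟨1, by omega⟩)) with hF₀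
  have way1 : ∑ m : Fin M, ∑ n : Fin M,
      (∑ σ : Equiv.Perm (Fin M), b (σ m) * (starRingEnd ℂ) (b (σ n)))
      = F₀ * ((M:ℂ) * M) + (((Nat.factorial M : ℕ) : ℂ) - F₀) * (M : ℂ) := by
    have := double_sum_ite (fun _ _ : Fin M => (1:ℂ)) ((Nat.factorial M : ℕ) : ℂ) F₀
    simp only [one_mul] at this
    calc ∑ m : Fin M, ∑ n : Fin M,
        (∑ σ : Equiv.Perm (Fin M), b (σ m) * (starRingEnd ℂ) (b (σ n)))
        = ∑ m : Fin M, ∑ n : Fin M,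
          (if m = n then ((Nat.factorial M : ℕ) : ℂ) else F₀) := by
          refine Finset.sum_congr rfl fun m _ => Finset.sum_congr rfl fun n _ => ?_
          exact Fmn_eq hM hb m n
      _ = F₀ * ((M:ℂ) * M) + (((Nat.factorial M : ℕ) : ℂ) - F₀) * (M : ℂ) := by
          rw [this]; simp
  have way2 : ∑ m : Fin M, ∑ n : Fin M,
      (∑ σ : Equiv.Perm (Fin M), b (σ m) * (starRingEnd ℂ) (b (σ n)))
      = ((Nat.factorial M : ℕ) : ℂ) * ((∑ k, b k) * (starRingEnd ℂ) (∑ k, b k)) := by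
    calc ∑ m : Fin M, ∑ n : Fin M,
        (∑ σ : Equiv.Perm (Fin M), b (σ m) * (starRingEnd ℂ) (b (σ n)))
        = ∑ m : Fin M, ∑ σ : Equiv.Perm (Fin M), ∑ n : Fin M,
            b (σ m) * (starRingEnd ℂ) (b (σ n)) :=
          Finset.sum_congr rfl fun _ _ => Finset.sum_comm
      _ = ∑ σ : Equiv.Perm (Fin M), ∑ m : Fin M, ∑ n : Fin M,
            b (σ m) * (starRingEnd ℂ) (b (σ n)) := Finset.sum_comm
      _ = ∑ σ : Equiv.Perm (Fin M), (∑ m, b (σ m)) * ((starRingEnd ℂ) (∑ n, b (σ n))) := by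
          refine Finset.sum_congr rfl fun σ _ => ?_
          rw [map_sum, Finset.sum_mul_sum]
      _ = ∑ σ : Equiv.Perm (Fin M), (∑ k, b k) * ((starRingEnd ℂ) (∑ k, b k)) := by
          refine Finset.sum_congr rfl fun σ _ => ?_
          rw [Equiv.sum_comp σ b]
      _ = ((Nat.factorial M : ℕ) : ℂ) * ((∑ k, b k) * (starRingEnd ℂ) (∑ k, b k)) := by
          rw [Finset.sum_const, card_perm_fin, nsmul_eq_mul]
  have := way1.symm.trans way2
  push_cast at this ⊢
  linear_combination this
end main

lemma identity1 {M : ℕ} (hM : 2 ≤ M) {a b : Fin M → ℂ}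
    (ha : ∀ m, a m * (starRingEnd ℂ) (a m) = 1)
    (hb : ∀ k, b k * (starRingEnd ℂ) (b k) = 1) :
    ∑ σ : Equiv.Perm (Fin M),
        (∑ m, a m * b (σ m)) * (starRingEnd ℂ) (∑ n, a n * b (σ n))
      = (M:ℂ) * ((Nat.factorial M : ℕ) : ℂ)
        + (∑ σ : Equiv.Perm (Fin M),
            b (σ ⟨0, by omega⟩) * (starRingEnd ℂ) (b (σ ⟨1, by omega⟩)))
          * ((∑ m, a m) * (starRingEnd ℂ) (∑ m, a m) - M) := by
  set F₀ := ∑ σ : Equiv.Perm (Fin M),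
      b (σ ⟨0, by omega⟩) * (starRingEnd ℂ) (b (σ ⟨1, by omega⟩)) with hF₀
  calc ∑ σ : Equiv.Perm (Fin M),
        (∑ m, a m * b (σ m)) * (starRingEnd ℂ) (∑ n, a n * b (σ n))
      = ∑ σ : Equiv.Perm (Fin M), ∑ m : Fin M, ∑ n : Fin M,
          (a m * (starRingEnd ℂ) (a n)) * (b (σ m) * (starRingEnd ℂ) (b (σ n))) := by
        refine Finset.sum_congr rfl fun σ _ => ?_
        rw [map_sum, Finset.sum_mul_sum]
        exact Finset.sum_congr rfl fun m _ => Finset.sum_congr rfl fun n _ => by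
          rw [map_mul]; ring
    _ = ∑ m : Fin M, ∑ n : Fin M, ∑ σ : Equiv.Perm (Fin M),
          (a m * (starRingEnd ℂ) (a n)) * (b (σ m) * (starRingEnd ℂ) (b (σ n))) := by
        rw [Finset.sum_comm]
        exact Finset.sum_congr rfl fun _ _ => Finset.sum_comm
    _ = ∑ m : Fin M, ∑ n : Fin M,
          (a m * (starRingEnd ℂ) (a n)) *
            (∑ σ : Equiv.Perm (Fin M), b (σ m) * (starRingEnd ℂ) (b (σ n))) := by
        simp_rw [← Finset.mul_sum]
    _ = ∑ m : Fin M, ∑ n : Fin M,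
          (a m * (starRingEnd ℂ) (a n)) *
            (if m = n then ((Nat.factorial M : ℕ) : ℂ) else F₀) := by
        refine Finset.sum_congr rfl fun m _ => Finset.sum_congr rfl fun n _ => ?_
        rw [Fmn_eq hM hb m n]
    _ = F₀ * (∑ m : Fin M, ∑ n : Fin M, a m * (starRingEnd ℂ) (a n))
        + (((Nat.factorial M : ℕ) : ℂ) - F₀) * ∑ m : Fin M, a m * (starRingEnd ℂ) (a m) :=
        double_sum_ite _ _ _
    _ = (M:ℂ) * ((Nat.factorial M : ℕ) : ℂ)
        + F₀ * ((∑ m, a m) * (starRingEnd ℂ) (∑ m, a m) - M) := by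
        rw [← Finset.sum_mul_sum, ← map_sum]
        simp only [ha]
        rw [Finset.sum_const, Finset.card_univ, Fintype.card_fin, nsmul_eq_mul, mul_one]
        ring

lemma E_bound (p q : ℝ) {M : ℕ} (hM : 2 ≤ M) :
    (Nat.factorial M : ℝ)⁻¹ * ∑ σ : Equiv.Perm (Fin M), ‖eta M σ p q‖ ^ 2
      ≤ 1 / M + (‖XX p M‖ * ‖XX (-q) M‖)
          / ((M : ℝ) ^ 2 * ((M : ℝ) ^ 2 - M)) := by
  have hMpos : (0:ℝ) < M := by positivity
  have hfac : (0:ℝ) < (Nat.factorial M : ℝ) := by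
    exact_mod_cast Nat.factorial_pos M
  have hM2 : (2:ℝ) ≤ (M:ℝ) := by exact_mod_cast hM
  have hMM : (0:ℝ) < (M : ℝ) ^ 2 - M := by nlinarith
  set a : Fin M → ℂ := fun m => ee ((m : ℝ) * p) with ha_def
  set b : Fin M → ℂ := fun k => ee ((k : ℝ) * (-q)) with hb_def
  have ha : ∀ m, a m * (starRingEnd ℂ) (a m) = 1 := fun m => ee_mul_conj _
  have hb : ∀ k, b k * (starRingEnd ℂ) (b k) = 1 := fun k => ee_mul_conj _
  set F₀ := ∑ σ : Equiv.Perm (Fin M),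
      b (σ ⟨0, by omega⟩) * (starRingEnd ℂ) (b (σ ⟨1, by omega⟩)) with hF₀def
  have heta : ∀ σ : Equiv.Perm (Fin M), eta M σ p q = (M:ℂ)⁻¹ * ∑ m, a m * b (σ m) := by
    intro σ
    simp only [_root_.eta]
    congr 1
    refine Finset.sum_congr rfl fun m _ => ?_
    show ee ((m : ℝ) * p - (σ m : ℝ) * q) = a m * b (σ m)
    rw [ha_def, hb_def, ← ee_add]
    congr 1
    ring
  -- sum of squares as real part of complex sum
  have hsum1 : ∑ σ : Equiv.Perm (Fin M), ‖eta M σ p q‖ ^ 2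
      = ((M:ℝ) * M)⁻¹ * (∑ σ : Equiv.Perm (Fin M),
          (∑ m, a m * b (σ m)) * (starRingEnd ℂ) (∑ n, a n * b (σ n))).re := by
    have hterm : ∀ σ : Equiv.Perm (Fin M), ‖eta M σ p q‖ ^ 2
        = ((M:ℝ) * M)⁻¹ * Complex.normSq (∑ m, a m * b (σ m)) := by
      intro σ
      rw [heta σ, ← Complex.normSq_eq_norm_sq, Complex.normSq_mul, Complex.normSq_inv,
        Complex.normSq_natCast]
    rw [Finset.sum_congr rfl fun σ _ => hterm σ, ← Finset.mul_sum]
    congr 1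
    have hcast : (∑ σ : Equiv.Perm (Fin M),
        ((∑ m, a m * b (σ m)) * (starRingEnd ℂ) (∑ n, a n * b (σ n))))
        = (((∑ σ : Equiv.Perm (Fin M), Complex.normSq (∑ m, a m * b (σ m)) : ℝ)) : ℂ) := by
      push_cast
      exact Finset.sum_congr rfl fun σ _ => Complex.mul_conj _
    rw [hcast, Complex.ofReal_re]
  -- identity 1
  have hid1 := identity1 hM ha hb
  have hSP : (∑ m, a m) = SP p M := rfl
  have hre : (∑ σ : Equiv.Perm (Fin M),
      (∑ m, a m * b (σ m)) * (starRingEnd ℂ) (∑ n, a n * b (σ n))).re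
      = (M:ℝ) * (Nat.factorial M : ℝ) + (F₀ * XX p M).re := by
    rw [hid1, hSP]
    show ((M:ℂ) * (Nat.factorial M : ℂ) + F₀ * (XX p M)).re = _
    simp [Complex.add_re, Complex.mul_re]
  -- identity 2 and the modulus of F₀
  have hid2 := identity2 hM hb
  have hSQ : (∑ k, b k) = SP (-q) M := rfl
  rw [hSQ] at hid2
  have habs2 : ‖F₀‖ * ((M:ℝ)^2 - M)
      = (Nat.factorial M : ℝ) * ‖XX (-q) M‖ := by
    have h1 := congrArg (‖·‖) hid2
    rw [norm_mul, norm_mul] at h1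
    have h2 : ‖(M:ℂ)^2 - M‖ = (M:ℝ)^2 - M := by
      have : ((M:ℂ)^2 - M) = ((((M:ℝ)^2 - M : ℝ)) : ℂ) := by push_cast; ring
      rw [this, Complex.norm_real, Real.norm_of_nonneg hMM.le]
    rw [h2, Complex.norm_natCast] at h1
    exact h1 ▸ rfl
  have hF0abs : ‖F₀‖ = (Nat.factorial M : ℝ) * ‖XX (-q) M‖ / ((M:ℝ)^2 - M) := by
    rw [eq_div_iff hMM.ne']
    linarith [habs2]
  -- put it together
  rw [hsum1, hre]
  have hstep : (F₀ * XX p M).re ≤ ‖F₀‖ * ‖XX p M‖ := by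
    calc (F₀ * XX p M).re ≤ ‖F₀ * XX p M‖ := Complex.re_le_norm _
      _ = ‖F₀‖ * ‖XX p M‖ := norm_mul _ _
  calc (Nat.factorial M : ℝ)⁻¹ * (((M:ℝ) * M)⁻¹ *
        ((M:ℝ) * (Nat.factorial M : ℝ) + (F₀ * XX p M).re))
      ≤ (Nat.factorial M : ℝ)⁻¹ * (((M:ℝ) * M)⁻¹ *
        ((M:ℝ) * (Nat.factorial M : ℝ) + ‖F₀‖ * ‖XX p M‖)) := by
        gcongr
    _ = 1 / M + (‖XX p M‖ * ‖XX (-q) M‖)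
          / ((M : ℝ) ^ 2 * ((M : ℝ) ^ 2 - M)) := by
        rw [hF0abs]
        field_simp

/-- (Corollary 1, asymptotic orthogonality) If `p ∉ ℤ` or `q ∉ ℤ`, then the
mean-square beam correlation `E[|η_M(p,q)|²]` (expectation over a uniformly
random permutation of `{0,…,M−1}`) tends to `0` as the number of antennas
`M → ∞`: random-permutation FDA steering vectors at two locations differing in
angle or in distance (within one distance period) are asymptotically
orthogonal in mean square. -/
theorem stmt_8 (p q : ℝ) (h : (∀ k : ℤ, p ≠ (k : ℝ)) ∨ (∀ k : ℤ, q ≠ (k : ℝ))) :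
    Filter.Tendsto
      (fun M : ℕ =>
        (Nat.factorial M : ℝ)⁻¹ * ∑ σ : Equiv.Perm (Fin M), ‖eta M σ p q‖ ^ 2)
      Filter.atTop (nhds 0) := by
  obtain ⟨C, hC0, hXY⟩ : ∃ C : ℝ, 0 ≤ C ∧ ∀ M : ℕ, 2 ≤ M →
      ‖XX p M‖ * ‖XX (-q) M‖ ≤ (C + M) * ((M:ℝ)^2 + M) := by
    rcases h with hp | hq
    · refine ⟨(2 / ‖ee p - 1‖)^2, by positivity, fun M hM => ?_⟩
      have h1 : ‖XX p M‖ ≤ (2 / ‖ee p - 1‖)^2 + M := by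
        refine (abs_XX_le p M).trans ?_
        gcongr
        exact abs_SP_le_const hp M
      have h2 : ‖XX (-q) M‖ ≤ (M:ℝ)^2 + M := by
        refine (abs_XX_le _ M).trans ?_
        gcongr
        exact abs_SP_le_card _ M
      exact mul_le_mul h1 h2 (by positivity) (by positivity)
    · have hq' : ∀ k : ℤ, -q ≠ (k : ℝ) := by
        intro k hk
        exact hq (-k) (by push_cast; linarith)
      refine ⟨(2 / ‖ee (-q) - 1‖)^2, by positivity, fun M hM => ?_⟩
      have h1 : ‖XX p M‖ ≤ (M:ℝ)^2 + M := by
        refine (abs_XX_le _ M).trans ?_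
        gcongr
        exact abs_SP_le_card _ M
      have h2 : ‖XX (-q) M‖ ≤ (2 / ‖ee (-q) - 1‖)^2 + M := by
        refine (abs_XX_le _ M).trans ?_
        gcongr
        exact abs_SP_le_const hq' M
      calc ‖XX p M‖ * ‖XX (-q) M‖
          ≤ ((M:ℝ)^2 + M) * ((2 / ‖ee (-q) - 1‖)^2 + M) :=
            mul_le_mul h1 h2 (by positivity) (by positivity)
        _ = ((2 / ‖ee (-q) - 1‖)^2 + M) * ((M:ℝ)^2 + M) := by ring
  have hup : ∀ M : ℕ, 2 ≤ M →
      (Nat.factorial M : ℝ)⁻¹ * ∑ σ : Equiv.Perm (Fin M), ‖eta M σ p q‖ ^ 2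
        ≤ (1 + 4*(C+1))/M := by
    intro M hM
    have hM2 : (2:ℝ) ≤ (M:ℝ) := by exact_mod_cast hM
    have h0 : (0:ℝ) < M := by linarith
    have hMM : (0:ℝ) < (M:ℝ)^2 - M := by nlinarith
    refine (E_bound p q hM).trans ?_
    have hfrac : (‖XX p M‖ * ‖XX (-q) M‖) / ((M:ℝ)^2 * ((M:ℝ)^2 - M))
        ≤ (C + M) * ((M:ℝ)^2 + M) / ((M:ℝ)^2 * ((M:ℝ)^2 - M)) :=
      div_le_div_of_nonneg_right (hXY M hM) (by positivity) |>.trans_eq rfl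
    have key : (C + M) * ((M:ℝ)^2 + M) / ((M:ℝ)^2 * ((M:ℝ)^2 - M)) ≤ 4*(C+1)/M := by
      rw [div_le_div_iff₀ (by positivity) h0]
      nlinarith [mul_nonneg (mul_nonneg hC0 (by linarith : (0:ℝ) ≤ (M:ℝ) - 2))
          (pow_nonneg h0.le 3), mul_nonneg hC0 (pow_nonneg h0.le 2),
          pow_nonneg h0.le 3, pow_nonneg h0.le 4,
          mul_nonneg (by linarith : (0:ℝ) ≤ (M:ℝ) - 2) (pow_nonneg h0.le 3)]
    calc 1/(M:ℝ) + (‖XX p M‖ * ‖XX (-q) M‖) / ((M:ℝ)^2 * ((M:ℝ)^2 - M))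
        ≤ 1/(M:ℝ) + 4*(C+1)/M := by linarith
      _ = (1 + 4*(C+1))/M := by ring
  have hDiv : Filter.Tendsto (fun M : ℕ => (1 + 4*(C+1))/(M:ℝ)) Filter.atTop (nhds 0) :=
    tendsto_const_div_atTop_nhds_zero_nat _
  refine tendsto_of_tendsto_of_tendsto_of_le_of_le' tendsto_const_nhds hDiv ?_ ?_
  · exact Filter.Eventually.of_forall fun M => by positivity
  · filter_upwards [Filter.eventually_ge_atTop 2] with M hM using hup M hM
end
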